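/- Let W ⊂ H be a closed subspace, A ∈ B(H) boundedly invertible with c‖x‖ ≤ ‖Ax‖ ≤ d‖x‖ for all x ∈ H and some c, d > 0. Then for all x ∈ H: d^{-1}‖P_W A* x‖ ≤ ‖P_{AW} x‖ ≤ c^{-1}‖P_W A* x‖. -/

import Mathlib

open ContinuousLinearMap

noncomputable def proj {H : Type*} [NormedAddCommGroup H] [InnerProductSpace ℂ H]
    (W : Submodule ℂ H) [CompleteSpace W] : H →L[ℂ] H :=
  W.subtypeL.comp (W.orthogonalProjection)

lemma inner_proj_eq {H : Type*} [NormedAddCommGroup H] [InnerProductSpace ℂ H]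
    (W : Submodule ℂ H) [CompleteSpace W] (x v : H) (hv : v ∈ W) :
    (inner ℂ x v : ℂ) = inner ℂ (proj W x) v := by
  have h : (inner ℂ (x - proj W x) v : ℂ) = 0 :=
    Submodule.starProjection_inner_eq_zero (K := W) x v hv
  rw [inner_sub_left] at h
  exact (sub_eq_zero.mp h)

lemma proj_mem {H : Type*} [NormedAddCommGroup H] [InnerProductSpace ℂ H]
    (W : Submodule ℂ H) [CompleteSpace W] (x : H) : proj W x ∈ W :=
  Submodule.coe_mem _

/-- If `W ⊂ H` is a closed subspace and `A ∈ B(H)` is boundedly invertible with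
`c‖x‖ ≤ ‖Ax‖ ≤ d‖x‖` for all `x`, then
`d⁻¹ ‖P_W A* x‖ ≤ ‖P_{AW} x‖ ≤ c⁻¹ ‖P_W A* x‖` for all `x ∈ H`. -/
theorem proj_map_norm_bounds {H : Type*} [NormedAddCommGroup H] [InnerProductSpace ℂ H]
    [CompleteSpace H] (W : Submodule ℂ H) [CompleteSpace W]
    (A : H ≃L[ℂ] H) [CompleteSpace (W.map ((A : H →L[ℂ] H) : H →ₗ[ℂ] H))]
    (c d : ℝ) (hc : 0 < c) (hd : 0 < d)
    (hA : ∀ x : H, c * ‖x‖ ≤ ‖A x‖ ∧ ‖A x‖ ≤ d * ‖x‖) :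
    ∀ x : H,
      d⁻¹ * ‖proj W (adjoint (A : H →L[ℂ] H) x)‖ ≤ ‖proj (W.map ((A : H →L[ℂ] H) : H →ₗ[ℂ] H)) x‖ ∧
      ‖proj (W.map ((A : H →L[ℂ] H) : H →ₗ[ℂ] H)) x‖ ≤ c⁻¹ * ‖proj W (adjoint (A : H →L[ℂ] H) x)‖ := by
  intro x
  set A' := (A : H →L[ℂ] H) with hA'
  set V := W.map (A' : H →ₗ[ℂ] H) with hV
  set p := proj V x with hp
  set q := proj W (adjoint A' x) with hq
  have hp0 : (0:ℝ) ≤ ‖p‖ := norm_nonneg _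
  have hq0 : (0:ℝ) ≤ ‖q‖ := norm_nonneg _
  constructor
  · -- lower bound : d⁻¹ ‖q‖ ≤ ‖p‖
    have hAq : A' q ∈ V := Submodule.mem_map_of_mem (proj_mem W _)
    have e1 : (inner ℂ (adjoint A' x) q : ℂ) = inner ℂ q q := inner_proj_eq W _ q (proj_mem W _)
    have e2 : (inner ℂ (adjoint A' x) q : ℂ) = inner ℂ x (A' q) := adjoint_inner_left A' q x
    have e3 : (inner ℂ x (A' q) : ℂ) = inner ℂ p (A' q) := inner_proj_eq V x _ hAq
    have key : ‖q‖ ^ 2 ≤ ‖p‖ * (d * ‖q‖) := by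
      calc ‖q‖ ^ 2 = ‖(inner ℂ q q : ℂ)‖ := by
            rw [inner_self_eq_norm_sq_to_K]; simp [sq_abs]
        _ = ‖(inner ℂ p (A' q) : ℂ)‖ := by rw [← e1, e2, e3]
        _ ≤ ‖p‖ * ‖A' q‖ := norm_inner_le_norm _ _
        _ ≤ ‖p‖ * (d * ‖q‖) := by
            have := (hA q).2
            exact mul_le_mul_of_nonneg_left this hp0
    rcases eq_or_lt_of_le hq0 with h0 | h0
    · rw [← h0, mul_zero]; exact hp0
    · rw [inv_mul_le_iff₀ hd]
      nlinarith
  · -- upper bound : ‖p‖ ≤ c⁻¹ ‖q‖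
    obtain ⟨w, hw, hAw⟩ := proj_mem V x
    rw [← hp] at hAw
    change A' w = p at hAw
    have e1 : (inner ℂ x p : ℂ) = inner ℂ p p := inner_proj_eq V x p (proj_mem V x)
    have e2 : (inner ℂ x p : ℂ) = inner ℂ q w := by
      rw [← hAw, ← adjoint_inner_left A' w x, inner_proj_eq W _ w hw]
    have hwn : ‖w‖ ≤ c⁻¹ * ‖p‖ := by
      have h1 := (hA w).1
      have h2 : (A : H → H) w = A' w := rfl
      rw [h2, hAw] at h1
      rw [le_inv_mul_iff₀ hc]
      exact h1
    have key : ‖p‖ ^ 2 ≤ ‖q‖ * (c⁻¹ * ‖p‖) := by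
      calc ‖p‖ ^ 2 = ‖(inner ℂ p p : ℂ)‖ := by
            rw [inner_self_eq_norm_sq_to_K]; simp [sq_abs]
        _ = ‖(inner ℂ q w : ℂ)‖ := by rw [← e1, e2]
        _ ≤ ‖q‖ * ‖w‖ := norm_inner_le_norm _ _
        _ ≤ ‖q‖ * (c⁻¹ * ‖p‖) := mul_le_mul_of_nonneg_left hwn hq0
    rcases eq_or_lt_of_le hp0 with h0 | h0
    · rw [← h0]; positivity
    · have k2 : c * ‖p‖ ^ 2 ≤ ‖q‖ * ‖p‖ := by
        calc c * ‖p‖ ^ 2 ≤ c * (‖q‖ * (c⁻¹ * ‖p‖)) := mul_le_mul_of_nonneg_left key hc.le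
          _ = ‖q‖ * ‖p‖ := by field_simp
      rw [le_inv_mul_iff₀ hc]
      nlinarith [k2, h0]
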